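/- Each of the maps α, β, γ of the 3-torus T³ = (ℝ/ℤ)³ is fixed-point free; hence the induced ℤ/2 × ℤ/2 action on T³ is free, so that the quotient B = T³/(ℤ/2 × ℤ/2) is a flat 3-manifold. -/
import Mathlib


/-- The 3-torus `(ℝ/ℤ)³`. -/
abbrev T3 : Type := AddCircle (1 : ℝ) × AddCircle (1 : ℝ) × AddCircle (1 : ℝ)

/-- The image of `1/2` in `ℝ/ℤ`. -/
noncomputable def half : AddCircle (1 : ℝ) := ((1/2 : ℝ) : AddCircle (1 : ℝ))

/-- `α(x₁,x₂,x₃) = (x₁+1/2, −x₂+1/2, −x₃)` as a bijection of the 3-torus. -/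
noncomputable def alphaT : Equiv.Perm T3 :=
  (Equiv.addRight half).prodCongr
    (((Equiv.neg (AddCircle (1 : ℝ))).trans (Equiv.addRight half)).prodCongr
      (Equiv.neg (AddCircle (1 : ℝ))))

/-- `β(x₁,x₂,x₃) = (−x₁+1/2, −x₂, x₃+1/2)` as a bijection of the 3-torus. -/
noncomputable def betaT : Equiv.Perm T3 :=
  ((Equiv.neg (AddCircle (1 : ℝ))).trans (Equiv.addRight half)).prodCongr
    ((Equiv.neg (AddCircle (1 : ℝ))).prodCongr (Equiv.addRight half))

/-- `γ(x₁,x₂,x₃) = (−x₁, x₂+1/2, −x₃+1/2)` as a bijection of the 3-torus. -/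
noncomputable def gammaT : Equiv.Perm T3 :=
  (Equiv.neg (AddCircle (1 : ℝ))).prodCongr
    ((Equiv.addRight half).prodCongr
      ((Equiv.neg (AddCircle (1 : ℝ))).trans (Equiv.addRight half)))

/-- Each of the maps `α, β, γ` of the 3-torus is fixed-point free; hence every nontrivial
element of the group `{id, α, β, γ} ≅ ℤ/2 × ℤ/2` acts freely on `T³`. -/
lemma half_ne_zero : half ≠ 0 := by
  rw [half, ne_eq, AddCircle.coe_eq_zero_iff]
  push_neg
  intro n h
  have : (2*n:ℝ) = 1 := by simp at h; linarith
  have := (Int.cast_injective (α := ℝ)) (by exact_mod_cast this : ((2*n:ℤ):ℝ) = ((1:ℤ):ℝ))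
  omega

lemma add_half_ne (x : AddCircle (1:ℝ)) : x + half ≠ x := fun h =>
  half_ne_zero (by rwa [add_eq_left] at h)

theorem statement1 :
    (∀ x : T3, alphaT x ≠ x) ∧ (∀ x : T3, betaT x ≠ x) ∧ (∀ x : T3, gammaT x ≠ x) ∧
    (∀ g : Equiv.Perm T3, g ∈ ({1, alphaT, betaT, gammaT} : Set (Equiv.Perm T3)) →
      g ≠ 1 → ∀ x : T3, g x ≠ x) := by
  have ha : ∀ x : T3, alphaT x ≠ x := fun x h => add_half_ne x.1 (congrArg Prod.fst h)
  have hb : ∀ x : T3, betaT x ≠ x := fun x h =>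
    add_half_ne x.2.2 (congrArg (fun p : T3 => p.2.2) h)
  have hc : ∀ x : T3, gammaT x ≠ x := fun x h =>
    add_half_ne x.2.1 (congrArg (fun p : T3 => p.2.1) h)
  refine ⟨ha, hb, hc, ?_⟩
  rintro g (rfl | rfl | rfl | rfl) hg x
  · exact absurd rfl hg
  · exact ha x
  · exact hb x
  · exact hc x
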